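/- Let b ∈ C¹_♯(Y_d)^d with flow X, let u₀ ∈ C¹(ℝ^d), and assume there exists ζ ∈ ℝ^d such that X(t,x)/t → ζ as t → ∞ for every x ∈ ℝ^d. For ε > 0 define u_ε(t,x) := u₀(ε X(t/ε, x/ε)), which is the solution of the transport equation ∂u_ε/∂t − b(x/ε)·∇u_ε = 0 on (0,∞)×ℝ^d with initial datum u_ε(0,·) = u₀. Then u_ε converges, as ε → 0, strongly in L^p_loc([0,∞)×ℝ^d) for every p ∈ [1,∞), to the function (t,x) ↦ u₀(x + tζ): i.e., for every compact K ⊂ [0,∞)×ℝ^d and every p ∈ [1,∞), ∫_K |u_ε(t,x) − u₀(x + tζ)|^p dt dx → 0 as ε → 0. -/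

import Mathlib

open MeasureTheory Filter Matrix

noncomputable section

/-- A function on `ℝ^d` is `ℤ^d`-periodic. -/
def ZdPeriodic {d : ℕ} {E : Type*} (f : (Fin d → ℝ) → E) : Prop :=
  ∀ (κ : Fin d → ℤ) (x : Fin d → ℝ), f (x + fun i => (κ i : ℝ)) = f x

/-- The unit cube `[0,1)^d`, a fundamental domain for the torus `Y_d = ℝ^d/ℤ^d`. -/
def unitCube (d : ℕ) : Set (Fin d → ℝ) := {x | ∀ i, x i ∈ Set.Ico (0 : ℝ) 1}

/-- `X` is the global flow of the vector field `b`: `∂X/∂t(t,x) = b(X(t,x))`, `X(0,x) = x`. -/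
def IsFlowOf {d : ℕ} (b : (Fin d → ℝ) → (Fin d → ℝ))
    (X : ℝ → (Fin d → ℝ) → (Fin d → ℝ)) : Prop :=
  ∀ x : Fin d → ℝ, X 0 x = x ∧ ∀ t : ℝ, HasDerivAt (fun s => X s x) (b (X t x)) t

/-- A measure `μ` on the torus `Y_d` (identified with a measure on `ℝ^d` carried by the unit
cube) is invariant for the flow `X`: `∫ ψ(X(t,y)) dμ = ∫ ψ dμ` for all `t` and all continuous
`ℤ^d`-periodic `ψ`. -/
def FlowInvariant {d : ℕ} (X : ℝ → (Fin d → ℝ) → (Fin d → ℝ))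
    (μ : Measure (Fin d → ℝ)) : Prop :=
  ∀ (t : ℝ) (ψ : (Fin d → ℝ) → ℝ), Continuous ψ → ZdPeriodic ψ →
    ∫ y, ψ (X t y) ∂μ = ∫ y, ψ y ∂μ

/-- Herman's rotation set `C_b = {∫ b dμ : μ invariant probability measure for the flow}`. -/
def rotationSet {d : ℕ} (b : (Fin d → ℝ) → (Fin d → ℝ))
    (X : ℝ → (Fin d → ℝ) → (Fin d → ℝ)) : Set (Fin d → ℝ) :=
  {ζ | ∃ μ : Measure (Fin d → ℝ), IsProbabilityMeasure μ ∧ μ (unitCube d)ᶜ = 0 ∧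
        FlowInvariant X μ ∧ ζ = ∫ y, b y ∂μ}

/-- The gradient of a scalar function on `ℝ^d`. -/
def grad {d : ℕ} (ψ : (Fin d → ℝ) → ℝ) (y : Fin d → ℝ) : Fin d → ℝ :=
  fun i => fderiv ℝ ψ y (Pi.single i 1)

section FlowAux

open Filter MeasureTheory Set

variable {d : ℕ} {b : (Fin d → ℝ) → (Fin d → ℝ)} {X : ℝ → (Fin d → ℝ) → (Fin d → ℝ)}
  {L : NNReal} {B : ℝ}

/-- Reduction of a point modulo `ℤ^d` into the unit cube. -/
lemma aux_reduce (x : Fin d → ℝ) :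
    (fun i => Int.fract (x i)) + (fun i => ((⌊x i⌋ : ℤ) : ℝ)) = x :=
  funext fun i => by simp [Int.fract_add_floor]

lemma aux_fract_mem (x : Fin d → ℝ) :
    (fun i => Int.fract (x i)) ∈ Set.Icc (0 : Fin d → ℝ) 1 :=
  ⟨fun i => Int.fract_nonneg _, fun i => (Int.fract_lt_one _).le⟩

/-- A continuous `ℤ^d`-periodic function is bounded. -/
lemma aux_bdd {F : Type*} [NormedAddCommGroup F] {f : (Fin d → ℝ) → F}
    (hf : Continuous f) (hper : ZdPeriodic f) : ∃ B, 0 ≤ B ∧ ∀ x, ‖f x‖ ≤ B := by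
  obtain ⟨C, hC⟩ := (isCompact_Icc (a := (0 : Fin d → ℝ)) (b := 1)).exists_bound_of_continuousOn
    hf.continuousOn
  refine ⟨max C 0, le_max_right _ _, fun x => ?_⟩
  have hx : f x = f (fun i => Int.fract (x i)) := by
    conv_lhs => rw [← aux_reduce x]
    exact hper _ _
  rw [hx]
  exact le_trans (hC _ (aux_fract_mem x)) (le_max_left _ _)

/-- A `C¹` `ℤ^d`-periodic vector field is globally Lipschitz. -/
lemma aux_lip (hb : ContDiff ℝ 1 b) (hbper : ZdPeriodic b) : ∃ L : NNReal, LipschitzWith L b := by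
  have hdiff : Differentiable ℝ b := hb.differentiable one_ne_zero
  have hper' : ZdPeriodic (fderiv ℝ b) := by
    intro κ x
    set c : Fin d → ℝ := fun i => ((κ i : ℤ) : ℝ) with hc
    have e : (fun y => b (y + c)) = b := funext fun y => hbper κ y
    have h1 : HasFDerivAt (fun y : Fin d → ℝ => b (y + c))
        ((fderiv ℝ b (x + c)).comp (ContinuousLinearMap.id ℝ (Fin d → ℝ))) x :=
      (hdiff (x + c)).hasFDerivAt.comp x ((hasFDerivAt_id x).add_const c)
    rw [e] at h1
    have h2 := h1.fderiv
    rw [ContinuousLinearMap.comp_id] at h2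
    exact h2.symm
  have hcont : Continuous (fderiv ℝ b) := hb.continuous_fderiv one_ne_zero
  obtain ⟨M, hM0, hM⟩ := aux_bdd hcont hper'
  refine ⟨M.toNNReal, lipschitzWith_of_nnnorm_fderiv_le hdiff fun x => ?_⟩
  rw [← norm_toNNReal]
  exact Real.toNNReal_mono (hM x)

lemma flow_cont_t (hX : IsFlowOf b X) (x : Fin d → ℝ) : Continuous (fun t => X t x) :=
  continuous_iff_continuousAt.2 fun t => ((hX x).2 t).continuousAt

/-- Grönwall: Lipschitz dependence on the initial condition, forward in time. -/
lemma flow_dist (hL : LipschitzWith L b) (hX : IsFlowOf b X) {t : ℝ} (ht : 0 ≤ t)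
    (x y : Fin d → ℝ) : dist (X t x) (X t y) ≤ dist x y * Real.exp (L * t) := by
  have h := dist_le_of_trajectories_ODE (v := fun _ => b) (a := 0) (b := t) (fun _ => hL)
    (flow_cont_t hX x).continuousOn (fun s _ => ((hX x).2 s).hasDerivWithinAt)
    (flow_cont_t hX y).continuousOn (fun s _ => ((hX y).2 s).hasDerivWithinAt)
    (by rw [(hX x).1, (hX y).1] : dist (X 0 x) (X 0 y) ≤ dist x y)
  have h2 := h t ⟨ht, le_rfl⟩
  rwa [sub_zero] at h2

lemma flow_cont_x (hL : LipschitzWith L b) (hX : IsFlowOf b X) {t : ℝ} (ht : 0 ≤ t) :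
    Continuous (fun x => X t x) := by
  have : LipschitzWith (Real.exp (L * t)).toNNReal (fun x => X t x) := by
    refine LipschitzWith.of_dist_le_mul fun x y => ?_
    rw [Real.coe_toNNReal _ (Real.exp_nonneg _)]
    rw [mul_comm]
    exact flow_dist hL hX ht x y
  exact this.continuous

/-- Speed bound for the flow. -/
lemma flow_norm_sub (hX : IsFlowOf b X) (hB : ∀ y, ‖b y‖ ≤ B) (x : Fin d → ℝ) (s t : ℝ) :
    ‖X t x - X s x‖ ≤ B * ‖t - s‖ :=
  Convex.norm_image_sub_le_of_norm_hasDerivWithin_le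
    (f := fun u => X u x) (f' := fun u => b (X u x)) (s := Set.univ)
    (fun u _ => ((hX x).2 u).hasDerivWithinAt) (fun u _ => hB _) convex_univ
    (Set.mem_univ s) (Set.mem_univ t)

/-- Crude linear bound on the displacement. -/
lemma flow_crude (hX : IsFlowOf b X) (hB : ∀ y, ‖b y‖ ≤ B) {t : ℝ} (ht : 0 ≤ t)
    (ζ : Fin d → ℝ) (x : Fin d → ℝ) : ‖X t x - x - t • ζ‖ ≤ (B + ‖ζ‖) * t := by
  have h1 : ‖X t x - x‖ ≤ B * t := by
    have := flow_norm_sub hX hB x 0 t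
    rwa [(hX x).1, sub_zero, Real.norm_eq_abs, abs_of_nonneg ht] at this
  have h2 : ‖t • ζ‖ = t * ‖ζ‖ := by
    rw [norm_smul, Real.norm_eq_abs, abs_of_nonneg ht]
  calc ‖X t x - x - t • ζ‖ ≤ ‖X t x - x‖ + ‖t • ζ‖ := norm_sub_le _ _
    _ ≤ B * t + t * ‖ζ‖ := by rw [h2]; linarith
    _ = (B + ‖ζ‖) * t := by ring

/-- Semigroup property of the flow (forward time). -/
lemma flow_semigroup (hL : LipschitzWith L b) (hX : IsFlowOf b X) (x : Fin d → ℝ)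
    (s : ℝ) {t : ℝ} (ht : 0 ≤ t) : X (s + t) x = X t (X s x) := by
  have hf' : ∀ r ∈ Set.Ico (0:ℝ) t,
      HasDerivWithinAt (fun r => X (s + r) x) (b (X (s + r) x)) (Set.Ici r) r := by
    intro r _
    have h := (hX x).2 (s + r)
    have hg : HasDerivAt (fun r : ℝ => s + r) 1 r := (hasDerivAt_id r).const_add s
    have := HasDerivAt.scomp r h hg
    simpa [Function.comp_def] using this.hasDerivWithinAt
  have hfc : ContinuousOn (fun r => X (s + r) x) (Set.Icc 0 t) :=
    ((flow_cont_t hX x).comp (continuous_const.add continuous_id)).continuousOn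
  have hg' : ∀ r ∈ Set.Ico (0:ℝ) t,
      HasDerivWithinAt (fun r => X r (X s x)) (b (X r (X s x))) (Set.Ici r) r :=
    fun r _ => ((hX (X s x)).2 r).hasDerivWithinAt
  have hgc : ContinuousOn (fun r => X r (X s x)) (Set.Icc 0 t) :=
    (flow_cont_t hX (X s x)).continuousOn
  have h0 : X (s + 0) x = X 0 (X s x) := by rw [add_zero, (hX (X s x)).1]
  exact ODE_solution_unique (fun _ => hL) hfc hf' hgc hg' h0 ⟨ht, le_rfl⟩

/-- Equivariance of the flow under `ℤ^d`-translations (forward time). -/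
lemma flow_periodic (hL : LipschitzWith L b) (hX : IsFlowOf b X) (hbper : ZdPeriodic b)
    (κ : Fin d → ℤ) (x : Fin d → ℝ) {t : ℝ} (ht : 0 ≤ t) :
    X t (x + fun i => ((κ i : ℤ) : ℝ)) = X t x + fun i => ((κ i : ℤ) : ℝ) := by
  set c : Fin d → ℝ := fun i => ((κ i : ℤ) : ℝ) with hc
  have hg' : ∀ r ∈ Set.Ico (0:ℝ) t,
      HasDerivWithinAt (fun r => X r x + c) (b (X r x + c)) (Set.Ici r) r := by
    intro r _
    have hb' : b (X r x + c) = b (X r x) := hbper κ (X r x)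
    rw [hb']
    exact (((hX x).2 r).add_const c).hasDerivWithinAt
  have hgc : ContinuousOn (fun r => X r x + c) (Set.Icc 0 t) :=
    ((flow_cont_t hX x).add continuous_const).continuousOn
  have hf' : ∀ r ∈ Set.Ico (0:ℝ) t,
      HasDerivWithinAt (fun r => X r (x + c)) (b (X r (x + c))) (Set.Ici r) r :=
    fun r _ => ((hX (x + c)).2 r).hasDerivWithinAt
  have hfc : ContinuousOn (fun r => X r (x + c)) (Set.Icc 0 t) :=
    (flow_cont_t hX (x + c)).continuousOn
  have h0 : X 0 (x + c) = X 0 x + c := by rw [(hX (x + c)).1, (hX x).1]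
  exact ODE_solution_unique (fun _ => hL) hfc hf' hgc hg' h0 ⟨ht, le_rfl⟩

/-- Key lemma: pointwise sublinearity of `X t x - x - tζ` upgrades to a bound uniform in `x`. -/
lemma unif_sublinear (hL : LipschitzWith L b) (hX : IsFlowOf b X) (hbper : ZdPeriodic b)
    (hB0 : 0 ≤ B) (hB : ∀ y, ‖b y‖ ≤ B) (ζ : Fin d → ℝ)
    (hζ : ∀ x : Fin d → ℝ, Tendsto (fun t : ℝ => t⁻¹ • X t x) atTop (nhds ζ)) :
    ∀ ε : ℝ, 0 < ε → ∃ T : ℝ, 1 ≤ T ∧ ∀ t : ℝ, T ≤ t → ∀ x, ‖X t x - x - t • ζ‖ ≤ ε * t := by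
  intro ε hε
  -- pointwise choice of good times
  have hpt : ∀ y : Fin d → ℝ, ∃ t : ℝ, 1 ≤ t ∧ ‖X t y - y - t • ζ‖ < ε / 4 * t := by
    intro y
    have h1 : Tendsto (fun t : ℝ => t⁻¹ • X t y - t⁻¹ • y - ζ) atTop (nhds 0) := by
      have h2 := ((hζ y).sub ((tendsto_inv_atTop_zero (𝕜 := ℝ)).smul_const y)).sub_const ζ
      simpa using h2
    have h4 : ∀ᶠ t : ℝ in atTop, ‖t⁻¹ • X t y - t⁻¹ • y - ζ‖ < ε / 4 :=
      NormedAddCommGroup.tendsto_nhds_zero.mp h1 (ε / 4) (by positivity)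
    obtain ⟨t, ht2, ht1⟩ := (h4.and (eventually_ge_atTop (1:ℝ))).exists
    have ht0 : 0 < t := lt_of_lt_of_le one_pos ht1
    refine ⟨t, ht1, ?_⟩
    have key : X t y - y - t • ζ = t • (t⁻¹ • X t y - t⁻¹ • y - ζ) := by
      rw [smul_sub, smul_sub, smul_inv_smul₀ ht0.ne', smul_inv_smul₀ ht0.ne']
    rw [key, norm_smul, Real.norm_eq_abs, abs_of_pos ht0, mul_comm (ε / 4) t]
    exact mul_lt_mul_of_pos_left ht2 ht0
  choose T₁ hT₁ hT₁' using hpt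
  set U : (Fin d → ℝ) → Set (Fin d → ℝ) :=
    fun y => {z | ‖X (T₁ y) z - z - (T₁ y) • ζ‖ < ε / 2 * T₁ y} with hU
  have hT₁0 : ∀ y, (0:ℝ) ≤ T₁ y := fun y => le_trans zero_le_one (hT₁ y)
  have hUopen : ∀ y, IsOpen (U y) := by
    intro y
    have hc : Continuous fun z => ‖X (T₁ y) z - z - (T₁ y) • ζ‖ :=
      (((flow_cont_x hL hX (hT₁0 y)).sub continuous_id).sub continuous_const).norm
    exact isOpen_lt hc continuous_const
  have hmem : ∀ y, y ∈ U y := by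
    intro y
    have : ε / 4 * T₁ y < ε / 2 * T₁ y := by nlinarith [hT₁ y]
    exact lt_trans (hT₁' y) this
  obtain ⟨S, hS⟩ := (isCompact_Icc (a := (0 : Fin d → ℝ)) (b := 1)).elim_finite_subcover U hUopen
    (fun z _ => Set.mem_iUnion.2 ⟨z, hmem z⟩)
  have h0Q : (0 : Fin d → ℝ) ∈ Set.Icc (0 : Fin d → ℝ) 1 := ⟨le_rfl, fun i => zero_le_one⟩
  have hSne : S.Nonempty := by
    rcases Set.mem_iUnion₂.1 (hS h0Q) with ⟨y, hy, _⟩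
    exact ⟨y, hy⟩
  set τ := S.sup' hSne T₁ with hτ
  have hτ1 : 1 ≤ τ := le_trans (hT₁ hSne.choose) (Finset.le_sup' T₁ hSne.choose_spec)
  set C := (B + ‖ζ‖) * τ with hC
  have hBζ : 0 ≤ B + ‖ζ‖ := add_nonneg hB0 (norm_nonneg _)
  have hC0 : 0 ≤ C := mul_nonneg hBζ (le_trans zero_le_one hτ1)
  have base : ∀ t : ℝ, 0 ≤ t → t ≤ τ → ∀ x, ‖X t x - x - t • ζ‖ ≤ ε / 2 * t + C := by
    intro t ht0 htτ x
    have h1 := flow_crude hX hB ht0 ζ x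
    have h2 : (B + ‖ζ‖) * t ≤ C := by
      rw [hC]; exact mul_le_mul_of_nonneg_left htτ hBζ
    nlinarith
  have main : ∀ n : ℕ, ∀ t : ℝ, 0 ≤ t → t ≤ (n : ℝ) → ∀ x,
      ‖X t x - x - t • ζ‖ ≤ ε / 2 * t + C := by
    intro n
    induction n with
    | zero =>
      intro t ht0 htn x
      exact base t ht0 (le_trans htn (by simpa using le_trans zero_le_one hτ1)) x
    | succ n ih =>
      intro t ht0 htn x
      by_cases hcase : t ≤ τ
      · exact base t ht0 hcase x
      · push_neg at hcase
        have ht0' : 0 ≤ t := ht0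
        set y : Fin d → ℝ := fun i => Int.fract (x i) with hy
        rcases Set.mem_iUnion₂.1 (hS (aux_fract_mem x)) with ⟨z, hzS, hyU⟩
        have hTz1 : 1 ≤ T₁ z := hT₁ z
        have hTzτ : T₁ z ≤ τ := Finset.le_sup' T₁ hzS
        have hr0 : 0 ≤ t - T₁ z := by linarith
        have hrn : t - T₁ z ≤ (n : ℝ) := by
          push_cast at htn ⊢; linarith
        have hper1 : X t x - x - t • ζ = X t y - y - t • ζ := by
          have h5 := flow_periodic hL hX hbper (fun i => ⌊x i⌋) y ht0'
          have h6 : y + (fun i => ((⌊x i⌋ : ℤ) : ℝ)) = x := aux_reduce x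
          rw [← h6, h5]
          abel
        have hcomp : X t y = X (t - T₁ z) (X (T₁ z) y) := by
          have h7 := flow_semigroup hL hX y (T₁ z) hr0
          rwa [add_sub_cancel] at h7
        have hsplit : X t y - y - t • ζ =
            (X (t - T₁ z) (X (T₁ z) y) - X (T₁ z) y - (t - T₁ z) • ζ)
              + (X (T₁ z) y - y - (T₁ z) • ζ) := by
          rw [hcomp, sub_smul]; abel
        have hA := ih (t - T₁ z) hr0 hrn (X (T₁ z) y)
        have hB2 : ‖X (T₁ z) y - y - (T₁ z) • ζ‖ < ε / 2 * T₁ z := hyU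
        rw [hper1, hsplit]
        calc ‖_ + _‖ ≤ ‖X (t - T₁ z) (X (T₁ z) y) - X (T₁ z) y - (t - T₁ z) • ζ‖
              + ‖X (T₁ z) y - y - (T₁ z) • ζ‖ := norm_add_le _ _
          _ ≤ (ε / 2 * (t - T₁ z) + C) + ε / 2 * T₁ z := add_le_add hA hB2.le
          _ = ε / 2 * t + C := by ring
  refine ⟨max 1 (C / (ε / 2)), le_max_left _ _, fun t ht x => ?_⟩
  have ht0 : 0 ≤ t := le_trans (le_trans zero_le_one (le_max_left _ _)) ht
  have h1 := main (Nat.ceil t) t ht0 (Nat.le_ceil t) x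
  have h2 : C ≤ ε / 2 * t := by
    have h3 := le_trans (le_max_right 1 (C / (ε / 2))) ht
    rw [div_le_iff₀ (by positivity)] at h3
    linarith
  linarith

end FlowAux


/-- (Homogenization of the linear transport equation.) Suppose
`X(t,x)/t → ζ` for every `x`. For `ε > 0`, the solution of
`∂u_ε/∂t − b(x/ε)·∇u_ε = 0`, `u_ε(0,·) = u₀`, is `u_ε(t,x) = u₀(ε X(t/ε, x/ε))`; it
converges strongly in `L^p_loc([0,∞)×ℝ^d)` for every `p ∈ [1,∞)`, as `ε → 0⁺`, to
`(t,x) ↦ u₀(x + tζ)`. -/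
theorem homogenization_of_transport_equation {d : ℕ} (hd : 1 ≤ d)
    (b : (Fin d → ℝ) → (Fin d → ℝ)) (hb : ContDiff ℝ 1 b) (hbper : ZdPeriodic b)
    (X : ℝ → (Fin d → ℝ) → (Fin d → ℝ)) (hX : IsFlowOf b X)
    (u0 : (Fin d → ℝ) → ℝ) (hu0 : ContDiff ℝ 1 u0)
    (ζ : Fin d → ℝ)
    (hζ : ∀ x : Fin d → ℝ, Tendsto (fun t : ℝ => t⁻¹ • X t x) atTop (nhds ζ)) :
    ∀ p : ℝ, 1 ≤ p → ∀ K : Set (ℝ × (Fin d → ℝ)), IsCompact K → (∀ q ∈ K, 0 ≤ q.1) →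
      Tendsto (fun ε : ℝ =>
          ∫ q in K, |u0 (ε • X (q.1 / ε) (ε⁻¹ • q.2)) - u0 (q.2 + q.1 • ζ)| ^ p)
        (nhdsWithin 0 (Set.Ioi 0)) (nhds 0) := by
  intro p hp K hK hKpos
  obtain ⟨B, hB0, hB⟩ := aux_bdd hb.continuous hbper
  obtain ⟨L, hL⟩ := aux_lip hb hbper
  rw [Metric.tendsto_nhdsWithin_nhds]
  intro δ hδ
  -- the volume of K
  have hKfin : volume K < ⊤ := hK.measure_lt_top
  set V := (volume K).toReal with hV
  have hV0 : 0 ≤ V := ENNReal.toReal_nonneg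
  set η := min 1 (δ / (2 * (V + 1))) with hη
  have hη0 : 0 < η := lt_min one_pos (by positivity)
  have hη1 : η ≤ 1 := min_le_left _ _
  -- uniform continuity of u0 on a compact neighborhood of the limit set
  set K₂ := (fun q : ℝ × (Fin d → ℝ) => q.2 + q.1 • ζ) '' K with hK₂
  have hK₂c : IsCompact K₂ := hK.image (continuous_snd.add (continuous_fst.smul continuous_const))
  set K₃ := Metric.cthickening 1 K₂ with hK₃
  have hK₃c : IsCompact K₃ := hK₂c.cthickening
  have huc := hK₃c.uniformContinuousOn_of_continuous hu0.continuous.continuousOn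
  rw [Metric.uniformContinuousOn_iff] at huc
  obtain ⟨δ₁, hδ₁, hucb⟩ := huc η hη0
  set ρ := min δ₁ 1 with hρ
  have hρ0 : 0 < ρ := lt_min hδ₁ one_pos
  -- a bound on the time coordinate over K
  obtain ⟨Tk, hTk⟩ := hK.exists_bound_of_continuousOn (continuous_fst.continuousOn)
  set Tk' := max Tk 0 with hTk'
  have hTk'0 : 0 ≤ Tk' := le_max_right _ _
  have hqTk : ∀ q ∈ K, q.1 ≤ Tk' :=
    fun q hq => le_trans (le_trans (le_abs_self _) (hTk q hq)) (le_max_left _ _)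
  -- uniform sublinearity
  set ε' := ρ / (2 * (Tk' + 1)) with hε'
  obtain ⟨T₀, hT₀1, hT₀⟩ := unif_sublinear hL hX hbper hB0 hB ζ hζ ε' (by positivity)
  have hBζ : 0 ≤ B + ‖ζ‖ := add_nonneg hB0 (norm_nonneg _)
  have hT₀0 : 0 < T₀ := lt_of_lt_of_le one_pos hT₀1
  have hM0 : 0 < (B + ‖ζ‖) * T₀ + 1 := by nlinarith
  set ε₀ := ρ / (2 * ((B + ‖ζ‖) * T₀ + 1)) with hε₀def
  have hε₀pos : 0 < ε₀ := by
    rw [hε₀def]; positivity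
  refine ⟨ε₀, hε₀pos, ?_⟩
  intro ε hεI hεd
  have hε : 0 < ε := hεI
  have hεε₀ : ε < ε₀ := by rwa [Real.dist_eq, sub_zero, abs_of_pos hε] at hεd
  -- pointwise gap bound
  have gap : ∀ q ∈ K, dist (ε • X (q.1 / ε) (ε⁻¹ • q.2)) (q.2 + q.1 • ζ) < ρ := by
    intro q hq
    have ht0 : 0 ≤ q.1 := hKpos q hq
    set s := q.1 / ε with hs
    set y := ε⁻¹ • q.2 with hy
    have hεs : ε * s = q.1 := by
      rw [hs]; field_simp
    have key : ε • X s y - (q.2 + q.1 • ζ) = ε • (X s y - y - s • ζ) := by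
      have h1 : ε • y = q.2 := by rw [hy, smul_smul, mul_inv_cancel₀ hε.ne', one_smul]
      have h2 : ε • (s • ζ) = q.1 • ζ := by rw [smul_smul, hεs]
      rw [smul_sub, smul_sub, h1, h2]; abel
    rw [dist_eq_norm, key, norm_smul, Real.norm_eq_abs, abs_of_pos hε]
    by_cases hsT : T₀ ≤ s
    · have h3 := hT₀ s hsT y
      have hs0 : 0 ≤ s := le_trans hT₀0.le hsT
      have hq1 : q.1 ≤ Tk' := hqTk q hq
      calc ε * ‖X s y - y - s • ζ‖ ≤ ε * (ε' * s) := mul_le_mul_of_nonneg_left h3 hε.le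
        _ = ε' * q.1 := by rw [← hεs]; ring
        _ ≤ ε' * Tk' := mul_le_mul_of_nonneg_left hq1 (by positivity)
        _ < ρ := by
            rw [hε', div_mul_eq_mul_div, div_lt_iff₀ (by positivity)]
            nlinarith
    · push_neg at hsT
      have hs0 : 0 ≤ s := div_nonneg ht0 hε.le
      have h3 := flow_crude hX hB hs0 ζ y
      have hεM : ε₀ * (2 * ((B + ‖ζ‖) * T₀ + 1)) = ρ := by
        rw [hε₀def]; field_simp
      calc ε * ‖X s y - y - s • ζ‖ ≤ ε * ((B + ‖ζ‖) * s) := mul_le_mul_of_nonneg_left h3 hε.le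
        _ ≤ ε * ((B + ‖ζ‖) * T₀) :=
            mul_le_mul_of_nonneg_left (mul_le_mul_of_nonneg_left hsT.le hBζ) hε.le
        _ < ρ := by
            have hp1 : 0 ≤ (B + ‖ζ‖) * T₀ := mul_nonneg hBζ hT₀0.le
            nlinarith [mul_le_mul_of_nonneg_right hεε₀.le hp1,
              mul_nonneg hε₀pos.le hp1]
  -- pointwise bound on the gap of u0
  have gapu : ∀ q ∈ K, |u0 (ε • X (q.1 / ε) (ε⁻¹ • q.2)) - u0 (q.2 + q.1 • ζ)| ≤ η := by
    intro q hq
    have hgt : (q.2 + q.1 • ζ) ∈ K₂ := ⟨q, hq, rfl⟩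
    have hgt3 : (q.2 + q.1 • ζ) ∈ K₃ := Metric.self_subset_cthickening K₂ hgt
    have ha3 : (ε • X (q.1 / ε) (ε⁻¹ • q.2)) ∈ K₃ :=
      Metric.mem_cthickening_of_dist_le _ _ 1 K₂ hgt
        (le_trans (gap q hq).le (min_le_right δ₁ 1))
    have hd1 : dist (ε • X (q.1 / ε) (ε⁻¹ • q.2)) (q.2 + q.1 • ζ) < δ₁ :=
      lt_of_lt_of_le (gap q hq) (min_le_left δ₁ 1)
    have := hucb _ ha3 _ hgt3 hd1
    rw [Real.dist_eq] at this
    exact this.le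
  -- from pointwise bound to integral bound
  have hint : ∀ q ∈ K, ‖|u0 (ε • X (q.1 / ε) (ε⁻¹ • q.2)) - u0 (q.2 + q.1 • ζ)| ^ p‖ ≤ η ^ p := by
    intro q hq
    rw [Real.norm_eq_abs, abs_of_nonneg (Real.rpow_nonneg (abs_nonneg _) p)]
    exact Real.rpow_le_rpow (abs_nonneg _) (gapu q hq) (le_trans zero_le_one hp)
  have hKm : MeasurableSet K := hK.isClosed.measurableSet
  have hb1 := MeasureTheory.norm_setIntegral_le_of_norm_le_const hKfin hint
  rw [Real.dist_eq, sub_zero, ← Real.norm_eq_abs]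
  have hηp : η ^ p ≤ η := by
    have := Real.rpow_le_rpow_of_exponent_ge hη0 hη1 hp
    rwa [Real.rpow_one] at this
  have hηδ : η * V < δ := by
    have h8 : η ≤ δ / (2 * (V + 1)) := min_le_right _ _
    rw [le_div_iff₀ (by positivity)] at h8
    nlinarith [mul_nonneg hη0.le hV0]
  calc ‖∫ q in K, |u0 (ε • X (q.1 / ε) (ε⁻¹ • q.2)) - u0 (q.2 + q.1 • ζ)| ^ p‖
      ≤ η ^ p * V := hb1
    _ ≤ η * V := mul_le_mul_of_nonneg_right hηp hV0
    _ < δ := hηδ
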